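/- For the parameter value h = 1, for every x ∈ [0,1] and every natural number n, the Takagi approximant of the lifted Bernoulli shift map satisfies the exact identity T_1^n(x) = ∫_0^x (⌊M_1^{n+1}(y)⌋ − ⌊y⌋) dy = Σ_{k=0}^{n} 2^{−k} · dist(2^k x, ℤ), where dist(y, ℤ) denotes the distance from y to the nearest integer. Consequently T_1^n(x) converges as n → ∞ to the classical Takagi function Σ_{k=0}^{∞} 2^{−k} dist(2^k x, ℤ). -/

import Mathlib

open Filter MeasureTheory intervalIntegral Set

/-- The lifted Bernoulli shift map `M_h`. -/
noncomputable def bernM (h x : ℝ) : ℝ :=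
  if Int.fract x < 1/2 then (⌊x⌋ : ℝ) + 2 * Int.fract x + h
  else (⌊x⌋ : ℝ) + 2 * Int.fract x - 1 - h

/-- The Takagi approximant `T_h^n(x) = ∫_0^x (⌊M_h^{n+1}(y)⌋ - ⌊y⌋) dy`. -/
noncomputable def bernTak (h : ℝ) (n : ℕ) (x : ℝ) : ℝ :=
  ∫ y in (0:ℝ)..x, ((⌊(bernM h)^[n+1] y⌋ : ℝ) - (⌊y⌋ : ℝ))

/-- Distance from a real number to the nearest integer. -/
noncomputable def distInt (y : ℝ) : ℝ := |y - (round y : ℝ)|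

/-- The slope function: +1 on the first half of each unit interval, -1 on the second. -/
noncomputable def sfun (y : ℝ) : ℝ := if Int.fract y < 1/2 then 1 else -1

lemma sfun_meas : Measurable sfun :=
  Measurable.ite (measurableSet_lt measurable_fract measurable_const)
    measurable_const measurable_const

lemma abs_sfun (y : ℝ) : |sfun y| ≤ 1 := by
  unfold sfun; split_ifs <;> simp

lemma floor_bernM (y : ℝ) :
    ⌊bernM 1 y⌋ = ⌊y⌋ + (if Int.fract y < 1/2 then 1 else -1) := by
  have h0 := Int.fract_nonneg y
  have h1 := Int.fract_lt_one y
  unfold bernM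
  split_ifs with h
  · rw [Int.floor_eq_iff]
    push_cast
    constructor <;> linarith
  · rw [Int.floor_eq_iff]
    push_cast
    constructor <;> linarith

lemma bernM_form (y : ℝ) :
    bernM 1 y = 2 * y + ((if Int.fract y < 1/2 then 1 - ⌊y⌋ else -⌊y⌋ - 2 : ℤ) : ℝ) := by
  unfold bernM
  split_ifs with h <;> · rw [Int.fract]; push_cast; ring

lemma iter_form (n : ℕ) (y : ℝ) : ∃ m : ℤ, (bernM 1)^[n] y = 2^n * y + m := by
  induction n with
  | zero => exact ⟨0, by simp⟩
  | succ n ih =>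
    obtain ⟨m, hm⟩ := ih
    rw [Function.iterate_succ_apply', hm, bernM_form]
    refine ⟨2 * m + (if Int.fract ((2:ℝ)^n * y + m) < 1/2 then
      1 - ⌊(2:ℝ)^n * y + (m:ℝ)⌋ else -⌊(2:ℝ)^n * y + (m:ℝ)⌋ - 2), ?_⟩
    push_cast
    ring

lemma fract_iter (n : ℕ) (y : ℝ) :
    Int.fract ((bernM 1)^[n] y) = Int.fract (2^n * y) := by
  obtain ⟨m, hm⟩ := iter_form n y
  rw [hm, Int.fract_add_intCast]

lemma floor_iter (n : ℕ) (y : ℝ) :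
    ⌊(bernM 1)^[n+1] y⌋ = ⌊y⌋ + ∑ k ∈ Finset.range (n+1),
      (if Int.fract ((2:ℝ)^k * y) < 1/2 then (1:ℤ) else -1) := by
  induction n with
  | zero => simpa using floor_bernM y
  | succ n ih =>
    rw [Function.iterate_succ_apply', floor_bernM, fract_iter, ih]
    conv_rhs => rw [Finset.sum_range_succ]
    ring

lemma integrand_eq (n : ℕ) (y : ℝ) :
    ((⌊(bernM 1)^[n+1] y⌋ : ℝ) - (⌊y⌋ : ℝ)) =
      ∑ k ∈ Finset.range (n+1), sfun ((2:ℝ)^k * y) := by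
  rw [floor_iter]
  push_cast
  simp only [sfun, apply_ite (fun z : ℤ => (z : ℝ)), apply_ite]
  ring

lemma round_eq_floor_of_fract_lt (y : ℝ) (h : Int.fract y < 1/2) : round y = ⌊y⌋ := by
  rw [round_eq, Int.floor_eq_iff]
  have h0 := Int.fract_nonneg y
  have h1 : Int.fract y = y - ⌊y⌋ := rfl
  constructor <;> linarith

lemma round_eq_floor_add_one_of_fract_ge (y : ℝ) (h : 1/2 ≤ Int.fract y) :
    round y = ⌊y⌋ + 1 := by
  rw [round_eq, Int.floor_eq_iff]
  have h1 := Int.fract_lt_one y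
  have h2 : Int.fract y = y - ⌊y⌋ := rfl
  push_cast
  constructor <;> linarith

lemma distInt_deriv_right (y : ℝ) :
    HasDerivWithinAt distInt (sfun y) (Set.Ioi y) y := by
  have hfl : Int.fract y = y - ⌊y⌋ := rfl
  have h0 := Int.fract_nonneg y
  have h1 := Int.fract_lt_one y
  unfold sfun
  split_ifs with h
  · -- on [y, ⌊y⌋ + 1/2), distInt z = z - ⌊y⌋
    have key : HasDerivWithinAt (fun z => z - (⌊y⌋ : ℝ)) 1 (Set.Ioi y) y :=
      ((hasDerivAt_id y).sub_const _).hasDerivWithinAt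
    refine key.congr_of_eventuallyEq ?_ ?_
    · have hmem : Set.Iio ((⌊y⌋ : ℝ) + 1/2) ∈ nhdsWithin y (Set.Ioi y) := by
        apply nhdsWithin_le_nhds
        exact Iio_mem_nhds (by linarith)
      filter_upwards [hmem, self_mem_nhdsWithin] with z hz hz'
      have hz1 : y < z := hz'
      have hzlb : (⌊y⌋ : ℝ) ≤ z := by linarith [Int.floor_le y]
      have hround : round z = ⌊y⌋ := by
        rw [round_eq, Int.floor_eq_iff]
        constructor <;> [skip; push_cast] <;> simp at hz <;> linarith [Int.floor_le y]
      simp only [distInt, hround, abs_of_nonneg (by linarith : (0:ℝ) ≤ z - (⌊y⌋:ℝ))]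
    · have hround : round y = ⌊y⌋ := round_eq_floor_of_fract_lt y h
      simp only [distInt, hround, abs_of_nonneg (by linarith : (0:ℝ) ≤ y - (⌊y⌋:ℝ))]
  · push_neg at h
    have key : HasDerivWithinAt (fun z => ((⌊y⌋ : ℝ) + 1) - z) (-1) (Set.Ioi y) y := by
      simpa using ((hasDerivAt_id y).const_sub ((⌊y⌋:ℝ) + 1)).hasDerivWithinAt
    refine key.congr_of_eventuallyEq ?_ ?_
    · have hmem : Set.Iio ((⌊y⌋ : ℝ) + 1) ∈ nhdsWithin y (Set.Ioi y) := by
        apply nhdsWithin_le_nhds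
        exact Iio_mem_nhds (by linarith)
      filter_upwards [hmem, self_mem_nhdsWithin] with z hz hz'
      have hz1 : y < z := hz'
      have hz2 : z < (⌊y⌋ : ℝ) + 1 := hz
      have hround : round z = ⌊y⌋ + 1 := by
        rw [round_eq, Int.floor_eq_iff]
        push_cast
        constructor <;> linarith
      simp only [distInt, hround]
      push_cast
      rw [abs_of_nonpos (by linarith)]
      ring
    · have hround : round y = ⌊y⌋ + 1 := round_eq_floor_add_one_of_fract_ge y h
      simp only [distInt, hround]
      push_cast
      rw [abs_of_nonpos (by linarith)]
      ring

lemma distInt_le (a : ℝ) (m : ℤ) : distInt a ≤ |a - (m : ℝ)| := by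
  rw [distInt, abs_sub_round_eq_min]
  have h1 : Int.fract a = a - ⌊a⌋ := rfl
  rcases le_or_gt (m : ℝ) (⌊a⌋ : ℝ) with hm | hm
  · refine le_trans (min_le_left _ _) ?_
    rw [abs_of_nonneg (by linarith [Int.fract_nonneg a])]
    linarith [Int.fract_nonneg a]
  · have hm' : (⌊a⌋ : ℝ) + 1 ≤ m := by exact_mod_cast Int.add_one_le_of_lt (by exact_mod_cast hm)
    refine le_trans (min_le_right _ _) ?_
    have h2 := Int.fract_lt_one a
    rw [abs_of_nonpos (by linarith)]
    linarith

lemma distInt_lipschitz : LipschitzWith 1 distInt := by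
  apply LipschitzWith.of_dist_le_mul
  intro a b
  simp only [NNReal.coe_one, one_mul, Real.dist_eq]
  rw [abs_sub_le_iff]
  constructor
  · have h1 : distInt a ≤ |a - (round b : ℝ)| := distInt_le a (round b)
    have h2 : |a - (round b : ℝ)| ≤ |a - b| + |b - (round b : ℝ)| := by
      calc |a - (round b : ℝ)| = |(a - b) + (b - (round b : ℝ))| := by ring_nf
        _ ≤ _ := abs_add_le _ _
    simp only [distInt] at *
    linarith
  · have h1 : distInt b ≤ |b - (round a : ℝ)| := distInt_le b (round a)
    have h2 : |b - (round a : ℝ)| ≤ |b - a| + |a - (round a : ℝ)| := by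
      calc |b - (round a : ℝ)| = |(b - a) + (a - (round a : ℝ))| := by ring_nf
        _ ≤ _ := abs_add_le _ _
    rw [abs_sub_comm b a] at h2
    simp only [distInt] at *
    linarith

lemma distInt_cont : Continuous distInt := distInt_lipschitz.continuous

lemma sfun_comp_integrable (c a b : ℝ) :
    IntervalIntegrable (fun y => sfun (c * y)) volume a b := by
  apply IntervalIntegrable.mono_fun' (g := fun _ => (1:ℝ)) intervalIntegrable_const
  · exact ((sfun_meas.comp (measurable_const_mul c)).aestronglyMeasurable).restrict
  · filter_upwards with y
    simpa using abs_sfun (c * y)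

lemma integral_sfun (t : ℝ) (ht : 0 ≤ t) :
    ∫ y in (0:ℝ)..t, sfun y = distInt t := by
  have h := integral_eq_sub_of_hasDeriv_right_of_le ht
    (distInt_cont.continuousOn)
    (fun y _ => distInt_deriv_right y)
    (by simpa using sfun_comp_integrable 1 0 t)
  have h0 : distInt 0 = 0 := by simp [distInt]
  rw [h, h0, sub_zero]

lemma integral_sfun_scaled (k : ℕ) (x : ℝ) (hx : 0 ≤ x) :
    ∫ y in (0:ℝ)..x, sfun ((2:ℝ)^k * y) = (1/2:ℝ)^k * distInt ((2:ℝ)^k * x) := by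
  have hc : ((2:ℝ)^k) ≠ 0 := by positivity
  rw [integral_comp_mul_left sfun hc, mul_zero,
    integral_sfun _ (by positivity), smul_eq_mul]
  congr 1
  rw [← inv_pow]
  norm_num

lemma bernTak_eq (x : ℝ) (hx : 0 ≤ x) (n : ℕ) :
    bernTak 1 n x = ∑ k ∈ Finset.range (n+1), (1/2:ℝ)^k * distInt ((2:ℝ)^k * x) := by
  unfold bernTak
  rw [intervalIntegral.integral_congr (g := fun y => ∑ k ∈ Finset.range (n+1),
      sfun ((2:ℝ)^k * y)) (fun y _ => integrand_eq n y)]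
  rw [intervalIntegral.integral_finset_sum (fun k _ => sfun_comp_integrable ((2:ℝ)^k) 0 x)]
  exact Finset.sum_congr rfl fun k _ => integral_sfun_scaled k x hx

theorem stmt7 (x : ℝ) (hx : x ∈ Set.Icc (0:ℝ) 1) :
    (∀ n : ℕ, bernTak 1 n x =
      ∑ k ∈ Finset.range (n+1), (1/2:ℝ)^k * distInt ((2:ℝ)^k * x)) ∧
    Tendsto (fun n : ℕ => bernTak 1 n x) atTop
      (nhds (∑' k : ℕ, (1/2:ℝ)^k * distInt ((2:ℝ)^k * x))) := by
  have hx0 : 0 ≤ x := hx.1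
  refine ⟨bernTak_eq x hx0, ?_⟩
  have hsum : Summable (fun k : ℕ => (1/2:ℝ)^k * distInt ((2:ℝ)^k * x)) := by
    apply Summable.of_norm_bounded (summable_geometric_of_lt_one (by norm_num) (by norm_num)
      (r := (1/2:ℝ)))
    intro k
    rw [Real.norm_eq_abs, abs_mul, abs_of_nonneg (by positivity : (0:ℝ) ≤ (1/2:ℝ)^k)]
    have h1 : |distInt ((2:ℝ)^k * x)| ≤ 1 := by
      rw [distInt, abs_abs]
      linarith [abs_sub_round ((2:ℝ)^k * x)]
    calc (1/2:ℝ)^k * |distInt ((2:ℝ)^k * x)| ≤ (1/2:ℝ)^k * 1 :=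
          mul_le_mul_of_nonneg_left h1 (by positivity)
      _ = (1/2:ℝ)^k := mul_one _
  have htend := hsum.hasSum.tendsto_sum_nat
  have htend2 := htend.comp (tendsto_add_atTop_nat 1)
  apply htend2.congr
  intro n
  simp only [Function.comp_apply]
  exact (bernTak_eq x hx0 n).symm
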